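/- Let (g₈, J) have (1,0)-basis satisfying dω¹ = −(A−i)ω¹∧ω³ − (A+i)ω¹∧ω̄³ + B ω³∧ω̄³, dω² = (A−i)ω²∧ω³ + (A+i)ω²∧ω̄³ + C ω³∧ω̄³, dω³ = 0, with Im A ≠ 0, and let F be a generic Hermitian form 2F = i(r²ω¹∧ω̄¹ + s²ω²∧ω̄² + t²ω³∧ω̄³) + u ω¹∧ω̄² − ū ω²∧ω̄¹ + v ω²∧ω̄³ − v̄ ω³∧ω̄² + z ω¹∧ω̄³ − z̄ ω³∧ω̄¹. Then ∂∂̄F ∧ F = 2( r²s²(1 + (Re A)²) + |u|²(Im A)² ) ω¹²³∧ω̄¹²³. In particular ∂∂̄F ∧ F never vanishes (since r²s² > |u|²), so g₈ carries no SKT metric. -/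
import Mathlib

set_option maxRecDepth 100000
set_option maxHeartbeats 2000000

noncomputable section

/-- The space of invariant complex forms: the exterior algebra over the span of
`ω¹, ω², ω³, ω̄¹, ω̄², ω̄³` (indexed `0,…,5`). -/
abbrev Lambda : Type := ExteriorAlgebra ℂ (Fin 6 → ℂ)

/-- The generators `ω¹, ω², ω³, ω̄¹, ω̄², ω̄³` as degree-one elements. -/
def w (i : Fin 6) : Lambda := ExteriorAlgebra.ι ℂ (Pi.single i 1)

/-- Antiderivation property (Leibniz rule against `1`-forms): the defining extension
property of (the bigraded pieces of) the Chevalley–Eilenberg differential. -/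
def IsAntideriv (D : Lambda →ₗ[ℂ] Lambda) : Prop :=
  D 1 = 0 ∧ ∀ (v : Fin 6 → ℂ) (x : Lambda),
    D (ExteriorAlgebra.ι ℂ v * x) =
      D (ExteriorAlgebra.ι ℂ v) * x - ExteriorAlgebra.ι ℂ v * D x

/-- The generic Hermitian form
`2F = i(r²ω¹∧ω̄¹ + s²ω²∧ω̄² + t²ω³∧ω̄³) + uω¹∧ω̄² − ūω²∧ω̄¹ + vω²∧ω̄³ − v̄ω³∧ω̄²
  + zω¹∧ω̄³ − z̄ω³∧ω̄¹`. -/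
def Fherm (r s t : ℝ) (u v z : ℂ) : Lambda :=
  (1 / 2 : ℂ) •
    (Complex.I • ((r : ℂ) ^ 2 • (w 0 * w 3) + (s : ℂ) ^ 2 • (w 1 * w 4) +
        (t : ℂ) ^ 2 • (w 2 * w 5)) +
      u • (w 0 * w 4) - (starRingEnd ℂ) u • (w 1 * w 3) +
      v • (w 1 * w 5) - (starRingEnd ℂ) v • (w 2 * w 4) +
      z • (w 0 * w 5) - (starRingEnd ℂ) z • (w 2 * w 3))

/-- Positivity constraints making `Fherm r s t u v z` a Hermitian metric. -/
def HermPos (r s t : ℝ) (u v z : ℂ) : Prop :=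
  r ≠ 0 ∧ s ≠ 0 ∧ t ≠ 0 ∧
  r ^ 2 * s ^ 2 > Complex.normSq u ∧ s ^ 2 * t ^ 2 > Complex.normSq v ∧
  r ^ 2 * t ^ 2 > Complex.normSq z ∧
  r ^ 2 * s ^ 2 * t ^ 2 +
      2 * (Complex.I * (starRingEnd ℂ) u * (starRingEnd ℂ) v * z).re >
    t ^ 2 * Complex.normSq u + r ^ 2 * Complex.normSq v + s ^ 2 * Complex.normSq z

/- ### Auxiliary lemmas -/

lemma w_anticomm (i j : Fin 6) : w j * w i = -(w i * w j) := by
  have := ExteriorAlgebra.ι_add_mul_swap (R := ℂ) (M := Fin 6 → ℂ)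
    (Pi.single i 1) (Pi.single j 1)
  unfold w
  linear_combination (norm := module) this

lemma wswap (i j : Fin 6) (_h : i < j) : w j * w i = -(w i * w j) := w_anticomm i j

lemma wswap' (i j : Fin 6) (_h : i < j) (x : Lambda) :
    w j * (w i * x) = -(w i * (w j * x)) := by
  rw [← mul_assoc, w_anticomm i j, neg_mul, mul_assoc]

lemma wsq (i : Fin 6) : w i * w i = 0 := ExteriorAlgebra.ι_sq_zero _

lemma wsq' (i : Fin 6) (x : Lambda) : w i * (w i * x) = 0 := by
  rw [← mul_assoc, wsq, zero_mul]

lemma leib {D : Lambda →ₗ[ℂ] Lambda} (hD : IsAntideriv D) (i : Fin 6) (x : Lambda) :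
    D (w i * x) = D (w i) * x - w i * D x := hD.2 _ _

def fdet : (i : ℕ) → (Fin 6 → ℂ) [⋀^Fin i]→ₗ[ℂ] ℂ
  | 6 => Matrix.detRowAlternating
  | _ => 0

lemma lift_M : ExteriorAlgebra.liftAlternating fdet (w 0 * w 1 * w 2 * w 3 * w 4 * w 5) = 1 := by
  simp only [w, mul_assoc]
  rw [ExteriorAlgebra.liftAlternating_ι_mul, ExteriorAlgebra.liftAlternating_ι_mul,
    ExteriorAlgebra.liftAlternating_ι_mul, ExteriorAlgebra.liftAlternating_ι_mul,
    ExteriorAlgebra.liftAlternating_ι_mul, ExteriorAlgebra.liftAlternating_ι]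
  simp only [AlternatingMap.curryLeft_apply_apply]
  rw [show ![Pi.single 0 1, Pi.single 1 1, Pi.single 2 1,
      Pi.single 3 1, Pi.single 4 1, (Pi.single 5 1 : Fin 6 → ℂ)] =
      (1 : Matrix (Fin 6) (Fin 6) ℂ) from by
    ext i j; fin_cases i <;> fin_cases j <;>
      simp [Matrix.one_apply, Pi.single_apply, Matrix.vecHead, Matrix.vecTail] <;> rfl]
  exact Matrix.det_one

lemma M_ne_zero : (w 0 * w 1 * w 2 * w 3 * w 4 * w 5 : Lambda) ≠ 0 := fun h => by
  have := lift_M; rw [h, map_zero] at this; exact one_ne_zero (α := ℂ) this.symm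

/-- on `(g₈, J_A)` (`dω¹ = −(A−i)ω¹∧ω³ −(A+i)ω¹∧ω̄³ + Bω³∧ω̄³`,
`dω² = (A−i)ω²∧ω³ + (A+i)ω²∧ω̄³ + Cω³∧ω̄³`, `dω³ = 0`, `Im A ≠ 0`), one has
`∂∂̄F ∧ F = 2(r²s²(1+(Re A)²) + |u|²(Im A)²) ω¹²³∧ω̄¹²³ ≠ 0`: no SKT metric. -/
theorem stmt12 (A B C : ℂ) (hA : A.im ≠ 0)
    (Dp Db : Lambda →ₗ[ℂ] Lambda) (hDp : IsAntideriv Dp) (hDb : IsAntideriv Db)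
    (hp0 : Dp (w 0) = (-(A - Complex.I)) • (w 0 * w 2))
    (hp1 : Dp (w 1) = (A - Complex.I) • (w 1 * w 2))
    (hp2 : Dp (w 2) = 0)
    (hp3 : Dp (w 3) = (-((starRingEnd ℂ) A - Complex.I)) • (w 3 * w 2) +
      (starRingEnd ℂ) B • (w 5 * w 2))
    (hp4 : Dp (w 4) = ((starRingEnd ℂ) A - Complex.I) • (w 4 * w 2) +
      (starRingEnd ℂ) C • (w 5 * w 2))
    (hp5 : Dp (w 5) = 0)
    (hb0 : Db (w 0) = (-(A + Complex.I)) • (w 0 * w 5) + B • (w 2 * w 5))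
    (hb1 : Db (w 1) = (A + Complex.I) • (w 1 * w 5) + C • (w 2 * w 5))
    (hb2 : Db (w 2) = 0)
    (hb3 : Db (w 3) = (-((starRingEnd ℂ) A + Complex.I)) • (w 3 * w 5))
    (hb4 : Db (w 4) = ((starRingEnd ℂ) A + Complex.I) • (w 4 * w 5))
    (hb5 : Db (w 5) = 0)
    (r s t : ℝ) (u v z : ℂ) (hF : HermPos r s t u v z) :
    Dp (Db (Fherm r s t u v z)) * Fherm r s t u v z =
      (2 * ((r : ℂ) ^ 2 * (s : ℂ) ^ 2 * (1 + (A.re : ℂ) ^ 2) +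
        (Complex.normSq u : ℂ) * (A.im : ℂ) ^ 2)) •
        (w 0 * w 1 * w 2 * w 3 * w 4 * w 5) ∧
    Dp (Db (Fherm r s t u v z)) * Fherm r s t u v z ≠ 0 := by
  have hre : ((A.re : ℂ)) = (A + (starRingEnd ℂ) A) / 2 := by
    rw [Complex.add_conj]; push_cast; ring
  have him : ((A.im : ℂ)) = ((starRingEnd ℂ) A - A) * Complex.I / 2 := by
    have h := Complex.sub_conj A
    push_cast at h
    linear_combination (Complex.I / 2) * h + (A.im : ℂ) * Complex.I_mul_I
  have hns : ((Complex.normSq u : ℂ)) = u * (starRingEnd ℂ) u := (Complex.mul_conj u).symm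
  have hI3 : Complex.I ^ 3 = -Complex.I := by
    rw [pow_succ, Complex.I_sq]; ring
  have hI4 : Complex.I ^ 4 = 1 := by
    rw [show (4:ℕ) = 2*2 from rfl, pow_mul, Complex.I_sq]; ring
  have key : Dp (Db (Fherm r s t u v z)) * Fherm r s t u v z =
      (2 * ((r : ℂ) ^ 2 * (s : ℂ) ^ 2 * (1 + (A.re : ℂ) ^ 2) +
        (Complex.normSq u : ℂ) * (A.im : ℂ) ^ 2)) •
        (w 0 * w 1 * w 2 * w 3 * w 4 * w 5) := by
    rw [hre, him, hns]
    simp (disch := decide) only [Fherm, smul_add, smul_sub, smul_smul, map_add, map_sub,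
      map_smul, map_neg, leib hDb, leib hDp, hb0, hb1, hb2, hb3, hb4, hb5,
      hp0, hp1, hp2, hp3, hp4, hp5, mul_assoc, smul_mul_assoc, mul_smul_comm,
      add_mul, mul_add, sub_mul, mul_sub, neg_mul, mul_neg, smul_neg, neg_neg,
      mul_zero, zero_mul, smul_zero, zero_smul, add_zero, zero_add, sub_zero,
      zero_sub, neg_zero, map_zero, wswap, wswap', wsq, wsq']
    match_scalars <;> (ring_nf; try simp only [Complex.I_sq, hI3, hI4]; try ring_nf; try ring)
  refine ⟨key, key ▸ ?_⟩
  obtain ⟨hr, hs, -, hu, -⟩ := hF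
  refine smul_ne_zero ?_ M_ne_zero
  have h1 : (0:ℝ) < r ^ 2 * s ^ 2 * (1 + A.re ^ 2) + Complex.normSq u * A.im ^ 2 := by
    have : (0:ℝ) < r ^ 2 * s ^ 2 := by positivity
    nlinarith [Complex.normSq_nonneg u, sq_nonneg A.im, sq_nonneg A.re]
  intro hzero
  rw [mul_eq_zero] at hzero
  rcases hzero with h | h
  · norm_num at h
  · have : ((r:ℂ) ^ 2 * (s:ℂ) ^ 2 * (1 + (A.re:ℂ) ^ 2) + (Complex.normSq u : ℂ) * (A.im:ℂ) ^ 2)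
        = ((r ^ 2 * s ^ 2 * (1 + A.re ^ 2) + Complex.normSq u * A.im ^ 2 : ℝ) : ℂ) := by
      push_cast; ring
    rw [this, Complex.ofReal_eq_zero] at h
    exact absurd h (ne_of_gt h1)
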